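/- Let ν > 0, ν₃ > 0 and λ₅, λ₆, λ₇ ∈ ℝ, and suppose D := (νν₃ − λ₆ + 1)² + 4ν(ν₃λ₆ − ν₃ + λ₅λ₇) > 0 and νν₃ − λ₆ + 1 > √D. Set z₁ := √((νν₃ − λ₆ + 1 + √D)/(2ν)) and z₂ := √((νν₃ − λ₆ + 1 − √D)/(2ν)), which are positive real numbers with z₁ > z₂, let a := min(z₁, z₂) = z₂ > 0 and, for d₁, d₂ ∈ ℝ, C₀ := ( |d₁|·z₁ + |d₂|/z₁ + |d₁|·z₂ + |d₂|/z₂ ) / (2ν(z₁² − z₂²)). Then for all x ∈ ℝ, | ∫_ℝ (d₁(2πξ)² + d₂)/det l(ξ) · e^{2πiξx} dξ | ≤ C₀ · e^{−a|x|}. -/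

import Mathlib

open Real Complex MeasureTheory FourierTransform Set Filter

lemma my_cexp_norm (c : ℂ) (t : ℝ) : ‖Complex.exp (-(c * t))‖ = Real.exp (-c.re * t) := by
  rw [Complex.norm_exp]
  norm_num

lemma my_integrableOn_cexp {c : ℂ} (hc : 0 < c.re) :
    IntegrableOn (fun t : ℝ => Complex.exp (-(c * t))) (Set.Ioi 0) := by
  have hm : AEStronglyMeasurable (fun t : ℝ => Complex.exp (-(c * t)))
      (volume.restrict (Set.Ioi (0:ℝ))) := by
    exact (Complex.continuous_exp.comp (by continuity)).aestronglyMeasurable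
  refine (exp_neg_integrableOn_Ioi 0 hc).integrable.mono' hm ?_
  filter_upwards with t
  rw [my_cexp_norm]

lemma my_integral_cexp_Ioi {c : ℂ} (hc : 0 < c.re) :
    ∫ t : ℝ in Set.Ioi (0:ℝ), Complex.exp (-(c * t)) = 1 / c := by
  have hc0 : c ≠ 0 := fun h => by simp [h] at hc
  have key : ∀ t : ℝ, HasDerivAt (fun s : ℝ => -Complex.exp (-(c * s)) / c)
      (Complex.exp (-(c * t))) t := by
    intro t
    have h0 : HasDerivAt (fun z : ℂ => -(c * z)) (-c) (t:ℂ) := by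
      have := ((hasDerivAt_id (t:ℂ)).const_mul c).neg; rw [mul_one] at this; exact this
    have h1 := (h0.cexp.neg.div_const c)
    have h2 : -(Complex.exp (-(c * (t:ℂ))) * -c) / c = Complex.exp (-(c * (t:ℂ))) := by
      field_simp
    rw [h2] at h1
    simpa using h1.comp_ofReal
  have htend : Tendsto (fun t : ℝ => -Complex.exp (-(c * t)) / c) atTop (nhds 0) := by
    rw [tendsto_zero_iff_norm_tendsto_zero]
    have : (fun t : ℝ => ‖-Complex.exp (-(c * t)) / c‖)
        = fun t : ℝ => Real.exp (-c.re * t) / ‖c‖ := by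
      ext t; rw [norm_div, norm_neg, my_cexp_norm]
    rw [this]
    have h3 : Tendsto (fun t : ℝ => Real.exp (-(c.re * t))) atTop (nhds 0) :=
      Real.tendsto_exp_neg_atTop_nhds_zero.comp (tendsto_id.const_mul_atTop hc)
    have h4 := h3.div_const ‖c‖
    rw [zero_div] at h4
    convert h4 using 2 with t
    ring_nf
  have := MeasureTheory.integral_Ioi_of_hasDerivAt_of_tendsto
    (f := fun s : ℝ => -Complex.exp (-(c * s)) / c) (a := 0)
    ((key 0).continuousAt.continuousWithinAt) (fun x _ => key x)
    (my_integrableOn_cexp hc) htend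
  rw [this]
  simp [neg_div]

lemma my_exp_abs_integrable {z : ℝ} (hz : 0 < z) :
    Integrable (fun t : ℝ => Real.exp (-(z * |t|))) := by
  have h1 : IntegrableOn (fun t : ℝ => Real.exp (-(z * |t|))) (Ioi 0) := by
    refine ((exp_neg_integrableOn_Ioi 0 hz)).congr_fun (fun t ht => ?_) measurableSet_Ioi
    rw [abs_of_pos ht]; ring_nf
  have h2 : IntegrableOn (fun t : ℝ => Real.exp (-(z * |t|))) (Iic 0) := by
    rw [← Measure.map_neg_eq_self (volume : Measure ℝ)]
    have m : MeasurableEmbedding fun x : ℝ => -x := (Homeomorph.neg ℝ).measurableEmbedding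
    rw [m.integrableOn_map_iff]
    simp_rw [Function.comp_def, abs_neg, neg_preimage, neg_Iic, neg_zero]
    exact Iff.mpr integrableOn_Ici_iff_integrableOn_Ioi h1
  have := h2.union h1
  rwa [Iic_union_Ioi, integrableOn_univ] at this

lemma my_invsq_integrable {z : ℝ} (hz : 0 < z) :
    Integrable (fun ξ : ℝ => ((2 * π * ξ) ^ 2 + z ^ 2)⁻¹) := by
  have hR : (2 * π / z) ≠ 0 := by positivity
  have h := (integrable_inv_one_add_sq.comp_mul_left' hR).const_mul ((z ^ 2)⁻¹)
  have heq : (fun ξ : ℝ => ((2 * π * ξ) ^ 2 + z ^ 2)⁻¹)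
      = fun ξ : ℝ => (z ^ 2)⁻¹ * (1 + (2 * π / z * ξ) ^ 2)⁻¹ := by
    funext ξ
    rw [← mul_inv]
    congr 1
    field_simp
    ring
  rw [heq]
  exact h

lemma my_fourier_exp_abs {z : ℝ} (hz : 0 < z) (ξ : ℝ) :
    𝓕 (fun t : ℝ => ((Real.exp (-(z * |t|)) : ℝ) : ℂ)) ξ
      = (((2 * z) / ((2 * π * ξ) ^ 2 + z ^ 2) : ℝ) : ℂ) := by
  set c₁ : ℂ := (z : ℂ) + (2 * π * ξ : ℝ) * Complex.I with hc₁
  set c₂ : ℂ := (z : ℂ) - (2 * π * ξ : ℝ) * Complex.I with hc₂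
  have hre₁ : c₁.re = z := by simp [hc₁]
  have hre₂ : c₂.re = z := by simp [hc₂]
  have hne₁ : c₁ ≠ 0 := fun h => hz.ne' (by rw [← hre₁, h]; simp)
  have hne₂ : c₂ ≠ 0 := fun h => hz.ne' (by rw [← hre₂, h]; simp)
  rw [Real.fourier_real_eq_integral_exp_smul]
  set F : ℝ → ℂ := fun t => Complex.exp (↑(-2 * π * t * ξ) * Complex.I) • ((Real.exp (-(z * |t|)) : ℝ) : ℂ) with hF
  have hint : Integrable F := by
    refine ((my_exp_abs_integrable hz).mono' ?_ ?_)
    · apply Continuous.aestronglyMeasurable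
      fun_prop
    · filter_upwards with t
      rw [hF, norm_smul]
      simp [Complex.norm_exp]
  have hsplit : (∫ t, F t) = (∫ t in Iic (0:ℝ), F t) + ∫ t in Ioi (0:ℝ), F t := by
    rw [← setIntegral_union (Iic_disjoint_Ioi le_rfl) measurableSet_Ioi
      hint.integrableOn hint.integrableOn, Iic_union_Ioi, setIntegral_univ]
  have hIoi : (∫ t in Ioi (0:ℝ), F t) = 1 / c₁ := by
    rw [← my_integral_cexp_Ioi (c := c₁) (by rw [hre₁]; exact hz)]
    refine setIntegral_congr_fun measurableSet_Ioi (fun t ht => ?_)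
    rw [hF]
    simp only [smul_eq_mul, Complex.ofReal_exp, ← Complex.exp_add]
    congr 1
    rw [abs_of_pos ht, hc₁]
    push_cast
    ring
  have hIic : (∫ t in Iic (0:ℝ), F t) = 1 / c₂ := by
    have h := integral_comp_neg_Iic (0:ℝ) (fun x => F (-x))
    simp only [neg_neg, neg_zero] at h
    rw [h, ← my_integral_cexp_Ioi (c := c₂) (by rw [hre₂]; exact hz)]
    refine setIntegral_congr_fun measurableSet_Ioi (fun t ht => ?_)
    rw [hF]
    simp only [smul_eq_mul, Complex.ofReal_exp, ← Complex.exp_add, abs_neg]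
    congr 1
    rw [abs_of_pos ht, hc₂]
    push_cast
    ring
  rw [hsplit, hIic, hIoi]
  have hprod : c₂ * c₁ = (((2 * π * ξ) ^ 2 + z ^ 2 : ℝ) : ℂ) := by
    rw [hc₁, hc₂]
    push_cast
    ring_nf
    rw [Complex.I_sq]
    ring
  have hden : (((2 * π * ξ) ^ 2 + z ^ 2 : ℝ) : ℂ) ≠ 0 := by
    rw [← hprod]; exact mul_ne_zero hne₂ hne₁
  rw [div_add_div _ _ hne₂ hne₁, hprod]
  rw [Complex.ofReal_div, div_eq_div_iff hden hden]
  rw [hc₁, hc₂]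
  push_cast
  ring

lemma my_key {z : ℝ} (hz : 0 < z) (x : ℝ) :
    ∫ ξ : ℝ, ((((2 * π * ξ) ^ 2 + z ^ 2)⁻¹ : ℝ) : ℂ) * Complex.exp (2 * π * Complex.I * ξ * x)
      = ((Real.exp (-(z * |x|)) / (2 * z) : ℝ) : ℂ) := by
  set f : ℝ → ℂ := fun t => ((Real.exp (-(z * |t|)) : ℝ) : ℂ) with hf
  have hcont : Continuous f := by fun_prop
  have hfi : Integrable f := (my_exp_abs_integrable hz).ofReal
  have hFi : Integrable (𝓕 f) := by
    have heq : 𝓕 f = fun ξ => (((2 * z) / ((2 * π * ξ) ^ 2 + z ^ 2) : ℝ) : ℂ) :=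
      funext fun ξ => my_fourier_exp_abs hz ξ
    rw [heq]
    refine Integrable.ofReal (𝕜 := ℂ) (f := fun ξ => (2 * z) / ((2 * π * ξ) ^ 2 + z ^ 2)) ?_
    simpa only [div_eq_mul_inv] using (my_invsq_integrable hz).const_mul (2 * z)
  have hinv := hfi.fourierInv_fourier_eq hFi (hcont.continuousAt (x := x))
  rw [Real.fourierInv_eq_fourier_neg,
    Real.fourier_real_eq_integral_exp_smul] at hinv
  simp_rw [hf, my_fourier_exp_abs hz] at hinv
  have hfun : (fun ξ : ℝ => Complex.exp (↑(-2 * π * ξ * (-x)) * Complex.I) •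
        (((2 * z) / ((2 * π * ξ) ^ 2 + z ^ 2) : ℝ) : ℂ))
      = fun ξ : ℝ => ((2 * z : ℝ) : ℂ) •
        (((((2 * π * ξ) ^ 2 + z ^ 2)⁻¹ : ℝ) : ℂ) * Complex.exp (2 * π * Complex.I * ξ * x)) := by
    funext ξ
    simp only [smul_eq_mul]
    rw [show ((-2 * π * ξ * (-x) : ℝ) : ℂ) * Complex.I = 2 * π * Complex.I * ξ * x by
      push_cast; ring]
    push_cast
    ring
  rw [hfun, integral_smul] at hinv
  have h2z : ((2 * z : ℝ) : ℂ) ≠ 0 := by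
    exact_mod_cast (by positivity : (2 * z : ℝ) ≠ 0)
  rw [smul_eq_mul] at hinv
  field_simp [hf] at hinv ⊢
  have h2z' : (2 * (z:ℂ)) ≠ 0 := by push_cast at h2z; exact h2z
  push_cast at hinv ⊢
  have hc : ∀ ξ : ℝ, (2 * ↑π * Complex.I * ↑x * ↑ξ : ℂ) = 2 * ↑π * Complex.I * ↑ξ * ↑x :=
    fun ξ => by ring
  simp_rw [hc]
  rw [eq_div_iff h2z']
  linear_combination hinv

lemma my_integrand_integrable {z : ℝ} (hz : 0 < z) (x : ℝ) :
    Integrable (fun ξ : ℝ => ((((2 * π * ξ) ^ 2 + z ^ 2)⁻¹ : ℝ) : ℂ) *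
      Complex.exp (2 * π * Complex.I * ξ * x)) := by
  refine (my_invsq_integrable hz).mono' ?_ ?_
  · apply Continuous.aestronglyMeasurable
    have hc : Continuous fun ξ : ℝ => ((2 * π * ξ) ^ 2 + z ^ 2)⁻¹ :=
      Continuous.inv₀ (by fun_prop) (fun ξ => by positivity)
    exact (Complex.continuous_ofReal.comp hc).mul (by fun_prop)
  · filter_upwards with ξ
    rw [norm_mul]
    have h1 : ‖Complex.exp (2 * π * Complex.I * ξ * x)‖ = 1 := by
      rw [Complex.norm_exp]
      simp [mul_comm, mul_assoc, mul_left_comm]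
    rw [h1, mul_one, Complex.norm_real, Real.norm_eq_abs]
    exact le_of_eq (abs_of_nonneg (by positivity))

/-- Exponential decay of the inverse Fourier transform of
`ξ ↦ (d₁(2πξ)² + d₂)/det l(ξ)` in the real-root case `D > 0`,
`νν₃ − λ₆ + 1 > √D`, where `det l(ξ)` is the determinant of the Thomas symbol and
`z₁ = √((νν₃ − λ₆ + 1 + √D)/(2ν))`, `z₂ = √((νν₃ − λ₆ + 1 − √D)/(2ν))`. -/
theorem inverse_fourier_decay_real_roots
    (ν ν₃ lam₅ lam₆ lam₇ : ℝ) (hν : 0 < ν) (hν₃ : 0 < ν₃)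
    (D : ℝ) (hD : D = (ν * ν₃ - lam₆ + 1) ^ 2 + 4 * ν * (ν₃ * lam₆ - ν₃ + lam₅ * lam₇))
    (hDpos : 0 < D)
    (hroot : ν * ν₃ - lam₆ + 1 > Real.sqrt D)
    (z₁ z₂ : ℝ)
    (hz₁ : z₁ = Real.sqrt ((ν * ν₃ - lam₆ + 1 + Real.sqrt D) / (2 * ν)))
    (hz₂ : z₂ = Real.sqrt ((ν * ν₃ - lam₆ + 1 - Real.sqrt D) / (2 * ν)))
    (a : ℝ) (ha : a = min z₁ z₂)
    (d₁ d₂ : ℝ) (C₀ : ℝ)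
    (hC₀ : C₀ = (|d₁| * z₁ + |d₂| / z₁ + |d₁| * z₂ + |d₂| / z₂) /
      (2 * ν * (z₁ ^ 2 - z₂ ^ 2))) :
    ∀ x : ℝ,
      ‖∫ ξ : ℝ, (((d₁ * (2 * π * ξ) ^ 2 + d₂) /
          ((-ν * (2 * π * ξ) ^ 2 + lam₆ - 1) * (-(2 * π * ξ) ^ 2 - ν₃) - lam₅ * lam₇) : ℝ) : ℂ) *
          Complex.exp (2 * (π : ℂ) * Complex.I * (ξ : ℂ) * (x : ℂ))‖
        ≤ C₀ * Real.exp (-a * |x|) := by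
  intro x
  have hs0 : 0 < Real.sqrt D := Real.sqrt_pos.mpr hDpos
  have hsD : Real.sqrt D ^ 2 = D := Real.sq_sqrt hDpos.le
  have hb0 : 0 < ν * ν₃ - lam₆ + 1 := hs0.trans hroot
  have hz1sq : z₁ ^ 2 = (ν * ν₃ - lam₆ + 1 + Real.sqrt D) / (2 * ν) := by
    rw [hz₁]; exact Real.sq_sqrt (by positivity)
  have hz2sq : z₂ ^ 2 = (ν * ν₃ - lam₆ + 1 - Real.sqrt D) / (2 * ν) := by
    rw [hz₂]
    exact Real.sq_sqrt (by
      have : 0 ≤ ν * ν₃ - lam₆ + 1 - Real.sqrt D := by linarith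
      positivity)
  have hz1pos : 0 < z₁ := by
    rw [hz₁]; exact Real.sqrt_pos.mpr (by positivity)
  have hz2pos : 0 < z₂ := by
    rw [hz₂]
    apply Real.sqrt_pos.mpr
    apply div_pos (by linarith) (by positivity)
  have hdiffsq : 0 < z₁ ^ 2 - z₂ ^ 2 := by
    rw [hz1sq, hz2sq]
    have : (ν * ν₃ - lam₆ + 1 + Real.sqrt D) / (2 * ν)
        - (ν * ν₃ - lam₆ + 1 - Real.sqrt D) / (2 * ν) = Real.sqrt D / ν := by
      field_simp; ring
    rw [this]; positivity
  have hz21 : z₂ < z₁ := by nlinarith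
  have hamin : a = z₂ := by rw [ha, min_eq_right hz21.le]
  -- coefficients sum/product
  have h1 : ν * (z₁ ^ 2 + z₂ ^ 2) = ν * ν₃ - lam₆ + 1 := by
    rw [hz1sq, hz2sq]; field_simp; ring
  have h2 : ν * (z₁ ^ 2 * z₂ ^ 2) = ν₃ - ν₃ * lam₆ - lam₅ * lam₇ := by
    rw [hz1sq, hz2sq]
    field_simp
    linear_combination (-1) * hsD - hD
  -- denominator factorization
  have hden : ∀ ξ : ℝ,
      (-ν * (2 * π * ξ) ^ 2 + lam₆ - 1) * (-(2 * π * ξ) ^ 2 - ν₃) - lam₅ * lam₇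
        = ν * ((2 * π * ξ) ^ 2 + z₁ ^ 2) * ((2 * π * ξ) ^ 2 + z₂ ^ 2) := by
    intro ξ
    linear_combination (-(2 * π * ξ) ^ 2 : ℝ) * h1 - h2
  set A : ℝ := (d₁ * z₁ ^ 2 - d₂) / (ν * (z₁ ^ 2 - z₂ ^ 2)) with hA
  set B : ℝ := (d₂ - d₁ * z₂ ^ 2) / (ν * (z₁ ^ 2 - z₂ ^ 2)) with hB
  have hPF : ∀ ξ : ℝ,
      ((d₁ * (2 * π * ξ) ^ 2 + d₂) /
        ((-ν * (2 * π * ξ) ^ 2 + lam₆ - 1) * (-(2 * π * ξ) ^ 2 - ν₃) - lam₅ * lam₇) : ℝ)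
      = A * ((2 * π * ξ) ^ 2 + z₁ ^ 2)⁻¹ + B * ((2 * π * ξ) ^ 2 + z₂ ^ 2)⁻¹ := by
    intro ξ
    have ht1 : (0:ℝ) < (2 * π * ξ) ^ 2 + z₁ ^ 2 := by positivity
    have ht2 : (0:ℝ) < (2 * π * ξ) ^ 2 + z₂ ^ 2 := by positivity
    rw [hden ξ, hA, hB]
    have h3 : ν * (z₁ ^ 2 - z₂ ^ 2) ≠ 0 := by positivity
    field_simp
    ring
  have hInt : ∀ ξ : ℝ,
      (((d₁ * (2 * π * ξ) ^ 2 + d₂) /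
        ((-ν * (2 * π * ξ) ^ 2 + lam₆ - 1) * (-(2 * π * ξ) ^ 2 - ν₃) - lam₅ * lam₇) : ℝ) : ℂ) *
        Complex.exp (2 * (π : ℂ) * Complex.I * (ξ : ℂ) * (x : ℂ))
      = (A : ℂ) * (((((2 * π * ξ) ^ 2 + z₁ ^ 2)⁻¹ : ℝ) : ℂ) *
            Complex.exp (2 * π * Complex.I * ξ * x))
        + (B : ℂ) * (((((2 * π * ξ) ^ 2 + z₂ ^ 2)⁻¹ : ℝ) : ℂ) *
            Complex.exp (2 * π * Complex.I * ξ * x)) := by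
    intro ξ
    rw [hPF ξ]
    push_cast
    ring
  simp only [hInt]
  rw [integral_add ((my_integrand_integrable hz1pos x).const_mul _)
    ((my_integrand_integrable hz2pos x).const_mul _),
    integral_const_mul, integral_const_mul, my_key hz1pos x, my_key hz2pos x]
  have hval : (A : ℂ) * ((Real.exp (-(z₁ * |x|)) / (2 * z₁) : ℝ) : ℂ)
      + (B : ℂ) * ((Real.exp (-(z₂ * |x|)) / (2 * z₂) : ℝ) : ℂ)
      = ((A * (Real.exp (-(z₁ * |x|)) / (2 * z₁))
          + B * (Real.exp (-(z₂ * |x|)) / (2 * z₂)) : ℝ) : ℂ) := by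
    push_cast; ring
  rw [hval, Complex.norm_real, Real.norm_eq_abs]
  set E := Real.exp (-a * |x|) with hE
  have hEpos : 0 < E := Real.exp_pos _
  have he2 : Real.exp (-(z₂ * |x|)) = E := by rw [hE, hamin]; ring_nf
  have he1 : Real.exp (-(z₁ * |x|)) ≤ E := by
    rw [← he2]
    exact Real.exp_le_exp.mpr (by nlinarith [abs_nonneg x])
  have habs1 : |d₁ * z₁ ^ 2 - d₂| ≤ |d₁| * z₁ ^ 2 + |d₂| := by
    refine (abs_sub _ _).trans ?_
    rw [abs_mul, _root_.abs_of_nonneg (sq_nonneg z₁)]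
  have habs2 : |d₂ - d₁ * z₂ ^ 2| ≤ |d₁| * z₂ ^ 2 + |d₂| := by
    refine (abs_sub _ _).trans ?_
    rw [abs_mul, _root_.abs_of_nonneg (sq_nonneg z₂)]
    linarith
  have hpos : 0 < ν * (z₁ ^ 2 - z₂ ^ 2) := mul_pos hν hdiffsq
  have hAb : |A| ≤ (|d₁| * z₁ ^ 2 + |d₂|) / (ν * (z₁ ^ 2 - z₂ ^ 2)) := by
    rw [hA, abs_div, _root_.abs_of_pos hpos]
    exact (div_le_div_iff_of_pos_right hpos).mpr habs1
  have hBb : |B| ≤ (|d₁| * z₂ ^ 2 + |d₂|) / (ν * (z₁ ^ 2 - z₂ ^ 2)) := by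
    rw [hB, abs_div, _root_.abs_of_pos hpos]
    exact (div_le_div_iff_of_pos_right hpos).mpr habs2
  have hC0eq : C₀ = (|d₁| * z₁ ^ 2 + |d₂|) / (ν * (z₁ ^ 2 - z₂ ^ 2)) / (2 * z₁)
      + (|d₁| * z₂ ^ 2 + |d₂|) / (ν * (z₁ ^ 2 - z₂ ^ 2)) / (2 * z₂) := by
    rw [hC₀]
    field_simp
    ring
  calc |A * (Real.exp (-(z₁ * |x|)) / (2 * z₁)) + B * (Real.exp (-(z₂ * |x|)) / (2 * z₂))|
      ≤ |A| * (Real.exp (-(z₁ * |x|)) / (2 * z₁))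
        + |B| * (Real.exp (-(z₂ * |x|)) / (2 * z₂)) := by
        refine (abs_add_le _ _).trans ?_
        rw [abs_mul, abs_mul,
          _root_.abs_of_pos (div_pos (Real.exp_pos _) (by linarith : (0:ℝ) < 2 * z₁)),
          _root_.abs_of_pos (div_pos (Real.exp_pos _) (by linarith : (0:ℝ) < 2 * z₂))]
    _ ≤ |A| * (E / (2 * z₁)) + |B| * (E / (2 * z₂)) := by
        rw [he2]
        gcongr
    _ = (|A| / (2 * z₁) + |B| / (2 * z₂)) * E := by ring
    _ ≤ ((|d₁| * z₁ ^ 2 + |d₂|) / (ν * (z₁ ^ 2 - z₂ ^ 2)) / (2 * z₁)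
        + (|d₁| * z₂ ^ 2 + |d₂|) / (ν * (z₁ ^ 2 - z₂ ^ 2)) / (2 * z₂)) * E := by
        gcongr
    _ = C₀ * E := by rw [hC0eq]
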